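/- Let G be a weighted directed graph on vertex set {1,…,N} with Laplacian L, and suppose G has a rooted-out branch. Let g = (1,…,1)^T ∈ ℝ^N and let w ∈ ℝ^N satisfy w^T L = 0 and w^T g = 1. Then exp(−tL) converges to the rank-one matrix g w^T as t → ∞, and the convergence is exponential: there exist c > 0 and λ > 0 such that ‖exp(−tL) − g w^T‖ ≤ c e^{−λ t} for all t ≥ 0. -/

import Mathlib

open Matrix Finset
open scoped ENNReal NNReal

/-- The Laplacian of the weighted directed graph on `Fin N` with weights `a`. -/
def graphLaplacian {N : ℕ} (a : Fin N → Fin N → ℝ) : Matrix (Fin N) (Fin N) ℝ :=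
  Matrix.of fun i j => if i = j then ∑ k ∈ Finset.univ.erase i, a i k else -(a i j)

/-- `G` has a rooted-out branch: some vertex has a directed path to every other vertex
(information flows from `j` to `i` along an edge when `a i j > 0`). -/
def hasRootedOutBranch {N : ℕ} (a : Fin N → Fin N → ℝ) : Prop :=
  ∃ r : Fin N, ∀ v : Fin N, Relation.ReflTransGen (fun u v => 0 < a v u) r v

/-- The Euclidean norm on `ℝ^m`. -/
noncomputable def euclidEnorm {m : Type*} [Fintype m] (v : m → ℝ) : ℝ :=
  Real.sqrt (∑ i, v i ^ 2)

/-- generic row formula for Laplacian-type matrices -/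
lemma lapRow {N : ℕ} {R : Type*} [CommRing R] (c : Fin N → Fin N → R) (v : Fin N → R) (i : Fin N) :
    ((Matrix.of fun i j => if i = j then ∑ k ∈ Finset.univ.erase i, c i k else -(c i j)).mulVec v) i
      = ∑ j ∈ Finset.univ.erase i, c i j * (v i - v j) := by
  classical
  unfold Matrix.mulVec dotProduct
  rw [← Finset.add_sum_erase _ _ (Finset.mem_univ i)]
  simp only [Matrix.of_apply, if_true, eq_self_iff_true]
  rw [Finset.sum_mul]
  have h2 : ∑ x ∈ Finset.univ.erase i,
        (if i = x then ∑ k ∈ Finset.univ.erase i, c i k else -(c i x)) * v x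
      = ∑ x ∈ Finset.univ.erase i, -(c i x) * v x :=
    Finset.sum_congr rfl fun x hx => by rw [if_neg (Ne.symm (Finset.ne_of_mem_erase hx))]
  rw [h2, ← Finset.sum_add_distrib]
  exact Finset.sum_congr rfl fun j _ => by ring

lemma lapRow_real {N : ℕ} (a : Fin N → Fin N → ℝ) (v : Fin N → ℝ) (i : Fin N) :
    ((graphLaplacian a).mulVec v) i = ∑ j ∈ Finset.univ.erase i, a i j * (v i - v j) :=
  lapRow a v i

/-- max principle : value at root dominates -/
lemma le_root {N : ℕ} {a : Fin N → Fin N → ℝ} (ha : ∀ i j, 0 ≤ a i j)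
    {r : Fin N} (hr : ∀ v : Fin N, Relation.ReflTransGen (fun u v => 0 < a v u) r v)
    (v : Fin N → ℝ) (hv : (graphLaplacian a).mulVec v = 0) (k : Fin N) : v k ≤ v r := by
  classical
  have : Nonempty (Fin N) := ⟨r⟩
  obtain ⟨i₀, hmax⟩ := Finite.exists_max v
  have key : ∀ b : Fin N, Relation.ReflTransGen (fun u v => 0 < a v u) r b →
      (∀ j, v j ≤ v b) → ∀ j, v j ≤ v r := by
    intro b hb
    induction hb with
    | refl => exact fun h => h
    | @tail b c hrb hbc ih =>
      intro hc j
      -- hbc : 0 < a c b ; hc : c is max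
      by_cases hbceq : b = c
      · exact ih (hbceq ▸ hc) j
      · have hrow := lapRow_real a v c
        rw [congrFun hv c] at hrow
        have hterms : ∀ x ∈ Finset.univ.erase c, 0 ≤ a c x * (v c - v x) :=
          fun x _ => mul_nonneg (ha c x) (by linarith [hc x])
        have hzero : ∀ x ∈ Finset.univ.erase c, a c x * (v c - v x) = 0 :=
          (Finset.sum_eq_zero_iff_of_nonneg hterms).mp hrow.symm
        have hb' : a c b * (v c - v b) = 0 :=
          hzero b (Finset.mem_erase.mpr ⟨hbceq, Finset.mem_univ b⟩)
        have hvb : v b = v c := by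
          rcases mul_eq_zero.mp hb' with h | h
          · exact absurd h (ne_of_gt hbc)
          · linarith
        exact ih (fun j => hvb ▸ hc j) j
  exact key i₀ (hr i₀) hmax k

lemma ker_real_const {N : ℕ} {a : Fin N → Fin N → ℝ} (ha : ∀ i j, 0 ≤ a i j)
    {r : Fin N} (hr : ∀ v : Fin N, Relation.ReflTransGen (fun u v => 0 < a v u) r v)
    (v : Fin N → ℝ) (hv : (graphLaplacian a).mulVec v = 0) (i : Fin N) : v i = v r := by
  have h1 := le_root ha hr v hv i
  have hneg : (graphLaplacian a).mulVec (-v) = 0 := by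
    rw [Matrix.mulVec_neg, hv, neg_zero]
  have h2 := le_root ha hr (-v) hneg i
  simp only [Pi.neg_apply, neg_le_neg_iff] at h2
  linarith

/-! ### complex versions -/

lemma mapLap {N : ℕ} (a : Fin N → Fin N → ℝ) :
    (graphLaplacian a).map Complex.ofReal
      = Matrix.of (fun i j => if i = j then ∑ k ∈ Finset.univ.erase i, ((a i k : ℝ) : ℂ)
          else -((a i j : ℝ) : ℂ)) := by
  ext i j
  simp only [Matrix.map_apply, graphLaplacian, Matrix.of_apply, apply_ite Complex.ofReal]
  push_cast
  rfl

lemma lapRow_complex {N : ℕ} (a : Fin N → Fin N → ℝ) (v : Fin N → ℂ) (i : Fin N) :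
    (((graphLaplacian a).map Complex.ofReal).mulVec v) i
      = ∑ j ∈ Finset.univ.erase i, (a i j : ℂ) * (v i - v j) := by
  rw [mapLap]
  exact lapRow (fun i j => ((a i j : ℝ) : ℂ)) v i

lemma re_mulVec {N : ℕ} (M : Matrix (Fin N) (Fin N) ℝ) (v : Fin N → ℂ) (i : Fin N) :
    (((M.map Complex.ofReal).mulVec v) i).re = (M.mulVec (fun j => (v j).re)) i := by
  simp [Matrix.mulVec, dotProduct, Complex.re_sum, Matrix.map_apply]

lemma im_mulVec {N : ℕ} (M : Matrix (Fin N) (Fin N) ℝ) (v : Fin N → ℂ) (i : Fin N) :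
    (((M.map Complex.ofReal).mulVec v) i).im = (M.mulVec (fun j => (v j).im)) i := by
  simp [Matrix.mulVec, dotProduct, Complex.im_sum, Matrix.map_apply]

lemma ker_complex_const {N : ℕ} {a : Fin N → Fin N → ℝ} (ha : ∀ i j, 0 ≤ a i j)
    {r : Fin N} (hr : ∀ v : Fin N, Relation.ReflTransGen (fun u v => 0 < a v u) r v)
    (v : Fin N → ℂ) (hv : ((graphLaplacian a).map Complex.ofReal).mulVec v = 0) (i : Fin N) :
    v i = v r := by
  have hre : (graphLaplacian a).mulVec (fun j => (v j).re) = 0 := by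
    funext k
    rw [← re_mulVec, congrFun hv k]
    rfl
  have him : (graphLaplacian a).mulVec (fun j => (v j).im) = 0 := by
    funext k
    rw [← im_mulVec, congrFun hv k]
    rfl
  have h1 := ker_real_const ha hr _ hre i
  have h2 := ker_real_const ha hr _ him i
  exact Complex.ext h1 h2

/-! ### eigenvalues of `L + P` have positive real part -/

lemma eig_re_pos {N : ℕ} {a : Fin N → Fin N → ℝ} (ha : ∀ i j, 0 ≤ a i j)
    {r : Fin N} (hr : ∀ v : Fin N, Relation.ReflTransGen (fun u v => 0 < a v u) r v)
    (w : Fin N → ℝ) (hwL : Matrix.vecMul w (graphLaplacian a) = 0) (hwg : ∑ i, w i = 1)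
    (μ : ℂ) (v : Fin N → ℂ) (hv : v ≠ 0)
    (heig : ((graphLaplacian a + Matrix.vecMulVec (fun _ => (1:ℝ)) w).map Complex.ofReal).mulVec v
      = μ • v) :
    0 < μ.re := by
  classical
  set L := graphLaplacian a with hLdef
  set P := Matrix.vecMulVec (fun _ => (1:ℝ)) w with hPdef
  set wc : Fin N → ℂ := fun i => (w i : ℂ) with hwc
  set d : ℂ := wc ⬝ᵥ v with hd
  -- the matrix splits
  have hsplit : ((L + P).map Complex.ofReal) = L.map Complex.ofReal + P.map Complex.ofReal := by
    ext i j; simp [Matrix.map_apply]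
  -- wᵀ (L+P) = wᵀ  (complexified)
  have hwA : Matrix.vecMul wc ((L + P).map Complex.ofReal) = wc := by
    funext j
    have h1 : ∑ x, w x * L x j = 0 := by
      have := congrFun hwL j
      simpa [Matrix.vecMul, dotProduct] using this
    have h2 : (Matrix.vecMul wc ((L + P).map Complex.ofReal)) j
        = ∑ x, (w x : ℂ) * ((L x j : ℂ) + (w j : ℂ)) := by
      simp [Matrix.vecMul, dotProduct, Matrix.map_apply, Matrix.add_apply,
        Matrix.vecMulVec_apply, hPdef, hwc]
    rw [h2]
    have h3 : ∑ x, (w x : ℂ) * ((L x j : ℂ) + (w j : ℂ))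
        = ((∑ x, w x * L x j : ℝ) : ℂ) + ((∑ x, w x : ℝ) : ℂ) * (w j : ℂ) := by
      push_cast
      simp only [mul_add, Finset.sum_add_distrib, Finset.sum_mul]
    rw [h3, h1, hwg]
    simp [hwc]
  -- μ d = d
  have hdot : μ * d = d := by
    have h1 : wc ⬝ᵥ (((L + P).map Complex.ofReal).mulVec v)
        = Matrix.vecMul wc ((L + P).map Complex.ofReal) ⬝ᵥ v := dotProduct_mulVec _ _ _
    rw [heig, hwA] at h1
    rw [← hd] at h1
    simpa [dotProduct_smul, smul_eq_mul, hd] using h1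
  by_contra hcon
  push_neg at hcon  -- μ.re ≤ 0
  have hμne1 : μ ≠ 1 := by
    intro h
    rw [h] at hcon
    norm_num at hcon
  have hd0 : d = 0 := by
    have : (μ - 1) * d = 0 := by rw [sub_mul, hdot, one_mul, sub_self]
    rcases mul_eq_zero.mp this with h | h
    · exact absurd (sub_eq_zero.mp h) hμne1
    · exact h
  -- P v = 0, hence L v = μ v
  have hPv : (P.map Complex.ofReal).mulVec v = 0 := by
    funext i
    have : ((P.map Complex.ofReal).mulVec v) i = ∑ j, (w j : ℂ) * v j := by
      simp [Matrix.mulVec, dotProduct, Matrix.map_apply, hPdef, Matrix.vecMulVec_apply]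
    rw [this]
    simpa [hd, dotProduct, hwc] using hd0
  have hLv : (L.map Complex.ofReal).mulVec v = μ • v := by
    have := heig
    rw [hsplit, Matrix.add_mulVec, hPv, add_zero] at this
    exact this
  -- pick index of maximal modulus
  have : Nonempty (Fin N) := ⟨r⟩
  obtain ⟨i, hmax⟩ := Finite.exists_max (fun k => ‖v k‖)
  have hvi : 0 < ‖v i‖ := by
    rcases Function.ne_iff.mp hv with ⟨k, hk⟩
    calc (0:ℝ) < ‖v k‖ := norm_pos_iff.mpr hk
    _ ≤ ‖v i‖ := hmax k
  -- row inequality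
  set di : ℝ := ∑ j ∈ Finset.univ.erase i, a i j with hdi
  have hdinn : 0 ≤ di := Finset.sum_nonneg fun j _ => ha i j
  have hrow : ((di : ℂ) - μ) * v i = ∑ j ∈ Finset.univ.erase i, (a i j : ℂ) * v j := by
    have h1 := lapRow_complex a v i
    rw [congrFun hLv i] at h1
    have h2 : ∑ j ∈ Finset.univ.erase i, (a i j : ℂ) * (v i - v j)
        = (di : ℂ) * v i - ∑ j ∈ Finset.univ.erase i, (a i j : ℂ) * v j := by
      rw [hdi]
      push_cast
      simp only [mul_sub]
      rw [Finset.sum_sub_distrib, ← Finset.sum_mul]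
    rw [h2] at h1
    have : (μ • v) i = μ * v i := rfl
    rw [this] at h1
    linear_combination -h1
  have habs : ‖(di : ℂ) - μ‖ ≤ di := by
    have h1 : ‖((di : ℂ) - μ) * v i‖
        ≤ ∑ j ∈ Finset.univ.erase i, a i j * ‖v i‖ := by
      rw [hrow]
      calc ‖∑ j ∈ Finset.univ.erase i, (a i j : ℂ) * v j‖
          ≤ ∑ j ∈ Finset.univ.erase i, ‖(a i j : ℂ) * v j‖ :=
            norm_sum_le _ _
        _ ≤ ∑ j ∈ Finset.univ.erase i, a i j * ‖v i‖ := by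
            refine Finset.sum_le_sum fun j _ => ?_
            rw [norm_mul, Complex.norm_real, Real.norm_eq_abs, abs_of_nonneg (ha i j)]
            exact mul_le_mul_of_nonneg_left (hmax j) (ha i j)
    rw [norm_mul] at h1
    rw [← Finset.sum_mul, ← hdi] at h1
    exact le_of_mul_le_mul_right h1 hvi
  -- conclude μ = 0
  have hsq : ‖(di : ℂ) - μ‖ ^ 2 ≤ di ^ 2 := by
    apply sq_le_sq'
    · linarith [norm_nonneg ((di : ℂ) - μ)]
    · exact habs
  rw [Complex.sq_norm, Complex.normSq_apply] at hsq
  simp only [Complex.sub_re, Complex.ofReal_re, Complex.sub_im, Complex.ofReal_im, zero_sub] at hsq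
  have hre0 : μ.re = 0 ∧ μ.im = 0 := by
    constructor <;> nlinarith [sq_nonneg μ.re, sq_nonneg μ.im,
      mul_nonneg hdinn (neg_nonneg.mpr hcon)]
  have hμ0 : μ = 0 := Complex.ext hre0.1 hre0.2
  -- then v is in the kernel, constant, and d = v r ≠ 0
  rw [hμ0, zero_smul] at hLv
  have hconst := ker_complex_const ha hr v hLv
  have hdvr : d = v r := by
    rw [hd, dotProduct]
    have : ∀ j, wc j * v j = wc j * v r := fun j => by rw [hconst j]
    rw [Finset.sum_congr rfl fun j _ => this j, ← Finset.sum_mul]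
    have : ∑ j, wc j = 1 := by
      rw [hwc]
      push_cast [← hwg]
      norm_cast
    rw [this, one_mul]
  have : v r = 0 := by rw [← hdvr, hd0]
  apply hv
  funext k
  rw [hconst k, this]
  rfl

/-! ### exponential applied to an eigenvector -/

lemma pow_mulVec_eigen {N : ℕ} (M : Matrix (Fin N) (Fin N) ℂ) (u : Fin N → ℂ) (μ : ℂ)
    (h : M.mulVec u = μ • u) (n : ℕ) : (M ^ n).mulVec u = μ ^ n • u := by
  induction n with
  | zero => simp [Matrix.one_mulVec]
  | succ n ih =>
    rw [pow_succ, ← Matrix.mulVec_mulVec, h, Matrix.mulVec_smul, ih, smul_smul, pow_succ]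
    ring_nf

lemma exp_mulVec_eigen {N : ℕ} (M : Matrix (Fin N) (Fin N) ℂ) (u : Fin N → ℂ) (μ : ℂ)
    (h : M.mulVec u = μ • u) :
    (NormedSpace.exp M).mulVec u = Complex.exp μ • u := by
  letI : SeminormedRing (Matrix (Fin N) (Fin N) ℂ) := Matrix.linftyOpSemiNormedRing
  letI : NormedRing (Matrix (Fin N) (Fin N) ℂ) := Matrix.linftyOpNormedRing
  letI : NormedAlgebra ℂ (Matrix (Fin N) (Fin N) ℂ) := Matrix.linftyOpNormedAlgebra
  letI : NormedAlgebra ℚ (Matrix (Fin N) (Fin N) ℂ) := Matrix.linftyOpNormedAlgebra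
  have hΦlin : IsLinearMap ℂ (fun X : Matrix (Fin N) (Fin N) ℂ => X.mulVec u) :=
    ⟨fun X Y => Matrix.add_mulVec X Y u, fun c X => Matrix.smul_mulVec c X u⟩
  let Φ₀ : Matrix (Fin N) (Fin N) ℂ →ₗ[ℂ] (Fin N → ℂ) := hΦlin.mk' _
  let Φ : Matrix (Fin N) (Fin N) ℂ →L[ℂ] (Fin N → ℂ) :=
    ⟨Φ₀, Φ₀.continuous_of_finiteDimensional⟩
  have hsum : Summable (fun n : ℕ => (n.factorial : ℂ)⁻¹ • M ^ n) := NormedSpace.expSeries_summable' M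
  have hscal : Summable (fun n : ℕ => (n.factorial : ℂ)⁻¹ * μ ^ n) := by
    simpa [smul_eq_mul] using NormedSpace.expSeries_summable' (𝕂 := ℂ) (𝔸 := ℂ) μ
  have key : (NormedSpace.exp M).mulVec u = ∑' n : ℕ, ((n.factorial : ℂ)⁻¹ * μ ^ n) • u := by
    have h1 : (NormedSpace.exp M).mulVec u = Φ (∑' n : ℕ, (n.factorial : ℂ)⁻¹ • M ^ n) := by
      rw [NormedSpace.exp_eq_tsum ℂ]
      rfl
    rw [h1, Φ.map_tsum hsum]
    congr 1
    funext n
    show ((n.factorial : ℂ)⁻¹ • M ^ n).mulVec u = _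
    rw [Matrix.smul_mulVec, pow_mulVec_eigen M u μ h, smul_smul]
  rw [key, hscal.tsum_smul_const]
  congr 1
  rw [Complex.exp_eq_exp_ℂ, NormedSpace.exp_eq_tsum ℂ]
  simp [smul_eq_mul]

/-! ### decay of the complexified semigroup -/

lemma complex_decay {N : ℕ} {a : Fin N → Fin N → ℝ} (ha : ∀ i j, 0 ≤ a i j)
    {r : Fin N} (hr : ∀ v : Fin N, Relation.ReflTransGen (fun u v => 0 < a v u) r v)
    (w : Fin N → ℝ) (hwL : Matrix.vecMul w (graphLaplacian a) = 0) (hwg : ∑ i, w i = 1) :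
    ∃ c > (0:ℝ), ∃ lam > (0:ℝ), ∀ t : ℝ, 0 ≤ t → ∀ i j : Fin N,
      ‖(NormedSpace.exp ((-t) •
          ((graphLaplacian a + Matrix.vecMulVec (fun _ => (1:ℝ)) w).map Complex.ofReal))) i j‖
        ≤ c * Real.exp (-lam * t) := by
  classical
  letI : SeminormedRing (Matrix (Fin N) (Fin N) ℂ) := Matrix.linftyOpSemiNormedRing
  letI : NormedRing (Matrix (Fin N) (Fin N) ℂ) := Matrix.linftyOpNormedRing
  letI : NormedAlgebra ℂ (Matrix (Fin N) (Fin N) ℂ) := Matrix.linftyOpNormedAlgebra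
  letI : NormedAlgebra ℚ (Matrix (Fin N) (Fin N) ℂ) := Matrix.linftyOpNormedAlgebra
  set Ac : Matrix (Fin N) (Fin N) ℂ :=
    (graphLaplacian a + Matrix.vecMulVec (fun _ => (1:ℝ)) w).map Complex.ofReal with hAc
  set B : Matrix (Fin N) (Fin N) ℂ := NormedSpace.exp (-Ac) with hB
  -- every spectral value of B has norm < 1
  have hspec : ∀ z ∈ spectrum ℂ B, ‖z‖ < 1 := by
    intro z hz
    set e := Matrix.toLinAlgEquiv (Pi.basisFun ℂ (Fin N)) with he
    have happly : ∀ (M : Matrix (Fin N) (Fin N) ℂ) (y : Fin N → ℂ), (e M) y = M.mulVec y := by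
      intro M y
      have hrepr : ⇑((Pi.basisFun ℂ (Fin N)).repr y) = y := funext fun j => Pi.basisFun_repr _ _ _ _
      rw [he, Matrix.toLinAlgEquiv_apply]
      funext k
      rw [hrepr]
      simp [Pi.basisFun_apply, Finset.sum_apply, Pi.single_apply]
    rw [← AlgEquiv.spectrum_eq e] at hz
    have heig : Module.End.HasEigenvalue (e B) z :=
      Module.End.hasEigenvalue_iff_mem_spectrum.mpr hz
    set E := Module.End.eigenspace (e B) z with hE
    have hcomm : B * Ac = Ac * B := by
      have h1 : Commute (-Ac) Ac := (Commute.refl Ac).neg_left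
      exact h1.exp_left.eq
    have hstab : ∀ x ∈ E, (e Ac) x ∈ E := by
      intro x hx
      rw [hE, Module.End.mem_eigenspace_iff] at hx ⊢
      have h3 : e B * e Ac = e Ac * e B := by
        rw [← _root_.map_mul, ← _root_.map_mul, hcomm]
      have h4 : (e B) ((e Ac) x) = (e Ac) ((e B) x) := by
        calc (e B) ((e Ac) x) = (e B * e Ac) x := (Module.End.mul_apply _ _ _).symm
          _ = (e Ac * e B) x := by rw [h3]
          _ = (e Ac) ((e B) x) := Module.End.mul_apply _ _ _
      rw [h4, hx, LinearMap.map_smul]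
    have hnt : Nontrivial E := Submodule.nontrivial_iff_ne_bot.mpr heig
    obtain ⟨μ, hμ⟩ := Module.End.exists_eigenvalue ((e Ac).restrict hstab)
    obtain ⟨x, hx⟩ := hμ.exists_hasEigenvector
    set u : Fin N → ℂ := (x : Fin N → ℂ) with hu
    have hu0 : u ≠ 0 := fun h => hx.right (by exact_mod_cast Subtype.ext h)
    have hAcu : Ac.mulVec u = μ • u := by
      have h1 := hx.apply_eq_smul
      have h2 := congrArg (Subtype.val) h1
      rw [LinearMap.restrict_coe_apply] at h2
      rw [← happly Ac u]
      exact h2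
    have hzu : B.mulVec u = z • u := by
      have h1 : (x : Fin N → ℂ) ∈ E := x.property
      have h2 : (e B) u = z • u := Module.End.mem_eigenspace_iff.mp h1
      exact (happly B u).symm.trans h2
    have hμre : 0 < μ.re := eig_re_pos ha hr w hwL hwg μ u hu0 hAcu
    have hnegAcu : (-Ac).mulVec u = (-μ) • u := by
      rw [Matrix.neg_mulVec, hAcu, neg_smul]
    have hBu : B.mulVec u = Complex.exp (-μ) • u := exp_mulVec_eigen (-Ac) u (-μ) hnegAcu
    have hzexp : z = Complex.exp (-μ) := by
      have : (z - Complex.exp (-μ)) • u = 0 := by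
        rw [sub_smul, ← hzu, ← hBu, sub_self]
      rcases smul_eq_zero.mp this with h | h
      · exact sub_eq_zero.mp h
      · exact absurd h hu0
    rw [hzexp, Complex.norm_exp]
    apply Real.exp_lt_one_iff.mpr
    simpa using hμre
  -- spectral radius is < 1
  have hsr : ∃ ρ : NNReal, (ρ : ℝ) < 1 ∧ spectralRadius ℂ B ≤ (ρ : ℝ≥0∞) := by
    rcases (spectrum ℂ B).eq_empty_or_nonempty with hemp | hne
    · refine ⟨0, by norm_num, ?_⟩
      rw [spectralRadius, hemp]
      simp
    · obtain ⟨z₀, hz₀, hmax⟩ := (spectrum.isCompact B).exists_isMaxOn hne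
        continuous_norm.continuousOn
      refine ⟨‖z₀‖₊, by simpa using hspec z₀ hz₀, ?_⟩
      rw [spectralRadius]
      refine iSup₂_le fun z hz => ?_
      have h1 : ‖z‖ ≤ ‖z₀‖ := hmax hz
      exact ENNReal.coe_le_coe.mpr (by exact_mod_cast h1)
  obtain ⟨ρ, hρ1, hρle⟩ := hsr
  have hρnn : (0:ℝ) ≤ ρ := ρ.coe_nonneg
  set r : ℝ := ((ρ:ℝ) + 1) / 2 with hrdef
  have hr0 : 0 < r := by rw [hrdef]; linarith
  have hr1 : r < 1 := by rw [hrdef]; linarith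
  have hρr : (ρ:ℝ) < r := by rw [hrdef]; linarith
  -- Gelfand's formula gives an eventual geometric bound
  have htend := spectrum.pow_nnnorm_pow_one_div_tendsto_nhds_spectralRadius B
  have hlt : spectralRadius ℂ B < ENNReal.ofReal r := by
    refine lt_of_le_of_lt hρle ?_
    rw [← ENNReal.ofReal_coe_nnreal]
    exact ENNReal.ofReal_lt_ofReal_iff_of_nonneg hρnn |>.mpr hρr
  have hev : ∀ᶠ n : ℕ in Filter.atTop,
      (‖B ^ n‖₊ : ℝ≥0∞) ^ (1 / (n:ℝ)) < ENNReal.ofReal r :=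
    htend.eventually_lt_const hlt
  obtain ⟨n₀, hn₀⟩ := Filter.eventually_atTop.mp hev
  have hpow : ∀ n : ℕ, n₀ ≤ n → 1 ≤ n → ‖B ^ n‖ ≤ r ^ n := by
    intro n hn hn1
    have h1 := (hn₀ n hn).le
    have hne : (n:ℝ) ≠ 0 := Nat.cast_ne_zero.mpr (by omega)
    have h2 : ((‖B ^ n‖₊ : ℝ≥0∞) ^ (1/(n:ℝ))) ^ (n:ℝ) ≤ (ENNReal.ofReal r) ^ (n:ℝ) :=
      ENNReal.rpow_le_rpow h1 (by positivity)
    rw [← ENNReal.rpow_mul, one_div_mul_cancel hne, ENNReal.rpow_one] at h2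
    rw [ENNReal.rpow_natCast, ← ENNReal.ofReal_pow hr0.le] at h2
    have h3 : ‖B ^ n‖ ≤ r ^ n := by
      have h4 : (‖B ^ n‖₊ : ℝ) ≤ r ^ n := by
        have := ENNReal.toReal_mono (by simp) h2
        simpa [ENNReal.toReal_ofReal (by positivity : (0:ℝ) ≤ r ^ n)] using this
      simpa using h4
    exact h3
  set n₁ : ℕ := max n₀ 1 with hn₁
  set C : ℝ := 1 + ∑ k ∈ Finset.range n₁, ‖B ^ k‖ / r ^ k with hC
  have hsumnn : 0 ≤ ∑ k ∈ Finset.range n₁, ‖B ^ k‖ / r ^ k :=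
    Finset.sum_nonneg fun k _ => by positivity
  have hC1 : 1 ≤ C := by rw [hC]; linarith
  have hCb : ∀ n : ℕ, ‖B ^ n‖ ≤ C * r ^ n := by
    intro n
    by_cases hn : n₁ ≤ n
    · calc ‖B ^ n‖ ≤ r ^ n := hpow n (le_trans (le_max_left _ _) hn) (le_trans (le_max_right _ _) hn)
        _ ≤ C * r ^ n := le_mul_of_one_le_left (by positivity) hC1
    · push_neg at hn
      have hmem : n ∈ Finset.range n₁ := Finset.mem_range.mpr hn
      have h1 : ‖B ^ n‖ / r ^ n ≤ ∑ k ∈ Finset.range n₁, ‖B ^ k‖ / r ^ k :=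
        Finset.single_le_sum (f := fun k => ‖B ^ k‖ / r ^ k) (fun k _ => by positivity) hmem
      have h2 : ‖B ^ n‖ / r ^ n ≤ C := by rw [hC]; linarith
      rw [div_le_iff₀ (by positivity : (0:ℝ) < r ^ n)] at h2
      linarith
  -- bound for the fractional part
  have hcont : Continuous fun s : ℝ => NormedSpace.exp ((-s) • Ac) :=
    NormedSpace.exp_continuous.comp ((continuous_neg.comp continuous_id).smul continuous_const)
  obtain ⟨C₁, hC₁⟩ := (isCompact_Icc (a := (0:ℝ)) (b := 1)).exists_bound_of_continuousOn
      hcont.continuousOn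
  set C₂ : ℝ := max C₁ 1 with hC₂
  have hC₂1 : (1:ℝ) ≤ C₂ := le_max_right _ _
  have hC₂b : ∀ s ∈ Set.Icc (0:ℝ) 1, ‖NormedSpace.exp ((-s) • Ac)‖ ≤ C₂ :=
    fun s hs => le_trans (hC₁ s hs) (le_max_left _ _)
  -- the decay rate
  set lam : ℝ := -Real.log r with hlam
  have hlam0 : 0 < lam := by rw [hlam]; linarith [Real.log_neg hr0 hr1]
  refine ⟨C₂ * C * Real.exp lam, by positivity, lam, hlam0, ?_⟩
  intro t ht i j
  set n : ℕ := ⌊t⌋₊ with hn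
  set s : ℝ := t - n with hs
  have hs0 : 0 ≤ s := by rw [hs]; simp only [sub_nonneg]; exact Nat.floor_le ht
  have hs1 : s ≤ 1 := by
    rw [hs]
    have := Nat.lt_floor_add_one t
    rw [← hn] at this
    linarith
  have htn : (t : ℝ) < n + 1 := by
    have := Nat.lt_floor_add_one t
    rw [← hn] at this
    exact this
  have hsplit2 : (-t) • Ac = (-s) • Ac + (n:ℝ) • (-Ac) := by
    have h1 : (-t : ℝ) = -s + -(n:ℝ) := by rw [hs]; ring
    rw [h1, add_smul]
    congr 1
    rw [neg_smul, ← smul_neg]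
  have hcommns : Commute ((-s) • Ac) ((n:ℝ) • (-Ac)) :=
    (((Commute.refl Ac).neg_right).smul_left (-s)).smul_right (n:ℝ)
  have hexp_split : NormedSpace.exp ((-t) • Ac)
      = NormedSpace.exp ((-s) • Ac) * B ^ n := by
    rw [hsplit2, Matrix.exp_add_of_commute _ _ hcommns]
    congr 1
    rw [Nat.cast_smul_eq_nsmul ℝ n (-Ac), Matrix.exp_nsmul]
  have hnorm : ‖NormedSpace.exp ((-t) • Ac)‖ ≤ C₂ * (C * r ^ n) := by
    rw [hexp_split]
    calc ‖NormedSpace.exp ((-s) • Ac) * B ^ n‖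
        ≤ ‖NormedSpace.exp ((-s) • Ac)‖ * ‖B ^ n‖ := norm_mul_le _ _
      _ ≤ C₂ * (C * r ^ n) := mul_le_mul (hC₂b s ⟨hs0, hs1⟩) (hCb n) (norm_nonneg _)
          (le_trans zero_le_one hC₂1)
  have hrn : r ^ n ≤ Real.exp lam * Real.exp (-lam * t) := by
    have h1 : r = Real.exp (-lam) := by rw [hlam, neg_neg, Real.exp_log hr0]
    rw [h1, ← Real.exp_nat_mul, ← Real.exp_add]
    apply Real.exp_le_exp.mpr
    nlinarith [mul_le_mul_of_nonneg_left (show t - 1 ≤ (n:ℝ) by linarith) hlam0.le]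
  have hentry : ‖(NormedSpace.exp ((-t) • Ac)) i j‖
      ≤ ‖NormedSpace.exp ((-t) • Ac)‖ := by
    set X := NormedSpace.exp ((-t) • Ac) with hX
    have h1 : ‖X i j‖₊ ≤ ‖X‖₊ := by
      rw [Matrix.linfty_opNNNorm_def]
      exact le_trans (Finset.single_le_sum (f := fun k => ‖X i k‖₊) (fun _ _ => zero_le)
        (Finset.mem_univ j)) (Finset.le_sup (f := fun i => ∑ j, ‖X i j‖₊) (Finset.mem_univ i))
    calc ‖X i j‖ = ‖X i j‖ := rfl
      _ ≤ ‖X‖ := h1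
  calc ‖(NormedSpace.exp ((-t) • Ac)) i j‖
      ≤ ‖NormedSpace.exp ((-t) • Ac)‖ := hentry
    _ ≤ C₂ * (C * r ^ n) := hnorm
    _ ≤ C₂ * (C * (Real.exp lam * Real.exp (-lam * t))) := by
        have hC0 : (0:ℝ) ≤ C := le_trans zero_le_one hC1
        have hC₂0 : (0:ℝ) ≤ C₂ := le_trans zero_le_one hC₂1
        exact mul_le_mul_of_nonneg_left (mul_le_mul_of_nonneg_left hrn hC0) hC₂0
    _ = C₂ * C * Real.exp lam * Real.exp (-lam * t) := by ring

/-! ### real matrix exponential manipulations -/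

set_option maxHeartbeats 1000000 in
lemma exp_smul_idem {N : ℕ} (s : ℝ) (P : Matrix (Fin N) (Fin N) ℝ) (hP : P * P = P) :
    NormedSpace.exp (s • P) = 1 + (Real.exp s - 1) • P := by
  letI : SeminormedRing (Matrix (Fin N) (Fin N) ℝ) := Matrix.linftyOpSemiNormedRing
  letI : NormedRing (Matrix (Fin N) (Fin N) ℝ) := Matrix.linftyOpNormedRing
  letI : NormedAlgebra ℝ (Matrix (Fin N) (Fin N) ℝ) := Matrix.linftyOpNormedAlgebra
  letI : NormedAlgebra ℚ (Matrix (Fin N) (Fin N) ℝ) := Matrix.linftyOpNormedAlgebra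
  have hpow : ∀ n : ℕ, P ^ (n + 1) = P := by
    intro n
    induction n with
    | zero => simp
    | succ m ih => rw [pow_succ, ih, hP]
  have hsum : Summable (fun n : ℕ => (n.factorial : ℝ)⁻¹ • (s • P) ^ n) :=
    NormedSpace.expSeries_summable' (s • P)
  have hscal : Summable (fun n : ℕ => (n.factorial : ℝ)⁻¹ * s ^ n) := by
    simpa [smul_eq_mul] using NormedSpace.expSeries_summable' (𝕂 := ℝ) (𝔸 := ℝ) s
  have hscal1 : Summable (fun n : ℕ => ((n+1).factorial : ℝ)⁻¹ * s ^ (n+1)) := by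
    exact (summable_nat_add_iff 1).mpr hscal
  have hexps : Real.exp s = ∑' n : ℕ, (n.factorial : ℝ)⁻¹ * s ^ n := by
    rw [Real.exp_eq_exp_ℝ, NormedSpace.exp_eq_tsum ℝ]
    simp [smul_eq_mul]
  have hshift : ∑' n : ℕ, ((n+1).factorial : ℝ)⁻¹ * s ^ (n+1) = Real.exp s - 1 := by
    have h0 := hscal.tsum_eq_zero_add
    rw [← hexps] at h0
    simp only [Nat.factorial_zero, Nat.cast_one, inv_one, pow_zero, mul_one] at h0
    linarith
  rw [NormedSpace.exp_eq_tsum ℝ]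
  beta_reduce
  rw [hsum.tsum_eq_zero_add]
  simp only [pow_zero, Nat.factorial_zero, Nat.cast_one, inv_one, one_smul]
  congr 1
  have h1 : ∀ n : ℕ, ((n+1).factorial : ℝ)⁻¹ • (s • P) ^ (n+1)
      = (((n+1).factorial : ℝ)⁻¹ * s ^ (n+1)) • P := by
    intro n
    rw [smul_pow, hpow, smul_smul]
  rw [tsum_congr h1, hscal1.tsum_smul_const, hshift]

set_option maxHeartbeats 1000000 in
lemma exp_mul_eq_of_mul_eq_zero {N : ℕ} (X P : Matrix (Fin N) (Fin N) ℝ) (hXP : X * P = 0) :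
    NormedSpace.exp X * P = P := by
  letI : SeminormedRing (Matrix (Fin N) (Fin N) ℝ) := Matrix.linftyOpSemiNormedRing
  letI : NormedRing (Matrix (Fin N) (Fin N) ℝ) := Matrix.linftyOpNormedRing
  letI : NormedAlgebra ℝ (Matrix (Fin N) (Fin N) ℝ) := Matrix.linftyOpNormedAlgebra
  letI : NormedAlgebra ℚ (Matrix (Fin N) (Fin N) ℝ) := Matrix.linftyOpNormedAlgebra
  have hpow : ∀ n : ℕ, X ^ (n + 1) * P = 0 := by
    intro n
    induction n with
    | zero => simpa using hXP
    | succ m ih => rw [pow_succ, mul_assoc, hXP, mul_zero]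
  have hsum : Summable (fun n : ℕ => (n.factorial : ℝ)⁻¹ • X ^ n) :=
    NormedSpace.expSeries_summable' X
  have key : NormedSpace.exp X * P = ∑' n : ℕ, ((n.factorial : ℝ)⁻¹ • X ^ n) * P := by
    rw [NormedSpace.exp_eq_tsum ℝ]
    exact (hsum.tsum_mul_right P).symm
  rw [key, tsum_eq_single 0 ?h]
  · simp
  case h =>
    intro n hn
    obtain ⟨m, rfl⟩ := Nat.exists_eq_succ_of_ne_zero hn
    rw [smul_mul_assoc, hpow, smul_zero]

set_option maxHeartbeats 1000000 in
lemma map_exp_ofReal {N : ℕ} (X : Matrix (Fin N) (Fin N) ℝ) :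
    (NormedSpace.exp X).map Complex.ofReal = NormedSpace.exp (X.map Complex.ofReal) := by
  letI : SeminormedRing (Matrix (Fin N) (Fin N) ℝ) := Matrix.linftyOpSemiNormedRing
  letI : NormedRing (Matrix (Fin N) (Fin N) ℝ) := Matrix.linftyOpNormedRing
  letI : NormedAlgebra ℝ (Matrix (Fin N) (Fin N) ℝ) := Matrix.linftyOpNormedAlgebra
  letI : NormedAlgebra ℚ (Matrix (Fin N) (Fin N) ℝ) := Matrix.linftyOpNormedAlgebra
  letI : SeminormedRing (Matrix (Fin N) (Fin N) ℂ) := Matrix.linftyOpSemiNormedRing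
  letI : NormedRing (Matrix (Fin N) (Fin N) ℂ) := Matrix.linftyOpNormedRing
  letI : NormedAlgebra ℝ (Matrix (Fin N) (Fin N) ℂ) := Matrix.linftyOpNormedAlgebra
  have hφcont : Continuous fun M : Matrix (Fin N) (Fin N) ℝ => M.map Complex.ofReal := by
    apply continuous_pi
    intro i
    apply continuous_pi
    intro j
    exact Complex.continuous_ofReal.comp ((continuous_apply j).comp (continuous_apply i))
  have h1 := NormedSpace.map_exp (Complex.ofRealHom.mapMatrix
      (m := Fin N)) hφcont X
  simp only [RingHom.mapMatrix_apply] at h1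
  have h2 : (⇑Complex.ofRealHom : ℝ → ℂ) = Complex.ofReal := rfl
  rw [h2] at h1
  exact h1

/-! ### entrywise decay of the real semigroup -/

set_option maxHeartbeats 1000000 in
lemma real_decay {N : ℕ} {a : Fin N → Fin N → ℝ} (ha : ∀ i j, 0 ≤ a i j)
    {r : Fin N} (hr : ∀ v : Fin N, Relation.ReflTransGen (fun u v => 0 < a v u) r v)
    (w : Fin N → ℝ) (hwL : Matrix.vecMul w (graphLaplacian a) = 0) (hwg : ∑ i, w i = 1) :
    ∃ c > (0:ℝ), ∃ lam > (0:ℝ), ∀ t : ℝ, 0 ≤ t → ∀ i j : Fin N,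
      |((NormedSpace.exp ((-t) • graphLaplacian a)
        - Matrix.vecMulVec (fun _ => (1:ℝ)) w : Matrix (Fin N) (Fin N) ℝ)) i j|
        ≤ c * Real.exp (-lam * t) := by
  classical
  set L := graphLaplacian a with hL
  set P := Matrix.vecMulVec (fun _ => (1:ℝ)) w with hP
  have hrowsum : ∀ i, ∑ j, graphLaplacian a i j = 0 := by
    intro i
    rw [← Finset.add_sum_erase _ _ (Finset.mem_univ i)]
    have h1 : graphLaplacian a i i = ∑ k ∈ Finset.univ.erase i, a i k := by simp [graphLaplacian]
    have h2 : ∀ j ∈ Finset.univ.erase i, graphLaplacian a i j = -(a i j) := by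
      intro j hj
      have hne : i ≠ j := fun h => (Finset.ne_of_mem_erase hj) h.symm
      simp [graphLaplacian, hne]
    rw [h1, Finset.sum_congr rfl h2, Finset.sum_neg_distrib]
    ring
  have hLP : L * P = 0 := by
    ext i j
    simp only [Matrix.mul_apply, hP, Matrix.vecMulVec_apply, Matrix.zero_apply, one_mul]
    rw [← Finset.sum_mul]
    rw [show (∑ k, L i k) = 0 from hrowsum i, zero_mul]
  have hPL : P * L = 0 := by
    ext i j
    simp only [Matrix.mul_apply, hP, Matrix.vecMulVec_apply, Matrix.zero_apply, one_mul]
    have := congrFun hwL j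
    simpa [Matrix.vecMul, dotProduct] using this
  have hPP : P * P = P := by
    ext i j
    simp only [Matrix.mul_apply, hP, Matrix.vecMulVec_apply, one_mul]
    rw [← Finset.sum_mul, hwg, one_mul]
  have hkey : ∀ t : ℝ, NormedSpace.exp ((-t) • L) - P
      = NormedSpace.exp ((-t) • (L + P)) - Real.exp (-t) • P := by
    intro t
    have hcomm : Commute ((-t) • L) ((-t) • P) := by
      apply Commute.smul_left
      apply Commute.smul_right
      show L * P = P * L
      rw [hLP, hPL]
    have h1 : NormedSpace.exp ((-t) • (L + P))
        = NormedSpace.exp ((-t) • L) * NormedSpace.exp ((-t) • P) := by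
      rw [smul_add]
      exact Matrix.exp_add_of_commute ((-t) • L) ((-t) • P) hcomm
    have h2 : NormedSpace.exp ((-t) • P) = 1 + (Real.exp (-t) - 1) • P :=
      exp_smul_idem (-t) P hPP
    have h3 : NormedSpace.exp ((-t) • L) * P = P := by
      apply exp_mul_eq_of_mul_eq_zero
      rw [smul_mul_assoc, hLP, smul_zero]
    rw [h1, h2, mul_add, mul_one, mul_smul_comm, h3, sub_smul, one_smul]
    abel
  obtain ⟨c₆, hc₆, lam₆, hlam₆, hb₆⟩ := complex_decay ha hr w hwL hwg
  set W : ℝ := ∑ k, |w k| with hW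
  have hWnn : 0 ≤ W := Finset.sum_nonneg fun k _ => abs_nonneg _
  refine ⟨c₆ + W + 1, by positivity, min lam₆ 1, lt_min hlam₆ one_pos, ?_⟩
  intro t ht i j
  set lam : ℝ := min lam₆ 1 with hlamdef
  have hlamle₆ : lam ≤ lam₆ := min_le_left _ _
  have hlamle1 : lam ≤ 1 := min_le_right _ _
  have hAdef : ((-t) • (L + P)).map Complex.ofReal = (-t) • ((L + P).map Complex.ofReal) := by
    ext i' j'
    simp only [Matrix.map_apply, Matrix.smul_apply, smul_eq_mul, Complex.real_smul]
    push_cast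
    ring
  have hmap := map_exp_ofReal ((-t) • (L + P))
  rw [hAdef] at hmap
  have hentry : |(NormedSpace.exp ((-t) • (L + P))) i j| ≤ c₆ * Real.exp (-lam₆ * t) := by
    have h1 := hb₆ t ht i j
    have h2 : (NormedSpace.exp ((-t) • ((L + P).map Complex.ofReal))) i j
        = Complex.ofReal ((NormedSpace.exp ((-t) • (L + P))) i j) := by
      rw [← hmap]
      rfl
    rw [hL, hP] at h2
    rw [h2, Complex.norm_real, Real.norm_eq_abs] at h1
    rw [hL, hP]
    exact h1
  have hPij : |P i j| ≤ W := by
    rw [hP]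
    simp only [Matrix.vecMulVec_apply, one_mul]
    exact Finset.single_le_sum (f := fun k => |w k|) (fun k _ => abs_nonneg _) (Finset.mem_univ j)
  have hexple₆ : Real.exp (-lam₆ * t) ≤ Real.exp (-lam * t) := by
    apply Real.exp_le_exp.mpr
    nlinarith [mul_le_mul_of_nonneg_right hlamle₆ ht]
  have hexple1 : Real.exp (-t) ≤ Real.exp (-lam * t) := by
    apply Real.exp_le_exp.mpr
    nlinarith [mul_le_mul_of_nonneg_right hlamle1 ht]
  calc |(NormedSpace.exp ((-t) • L) - P) i j|
      = |(NormedSpace.exp ((-t) • (L + P))) i j - Real.exp (-t) * P i j| := by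
        rw [hkey t]
        simp [Matrix.sub_apply, Matrix.smul_apply, smul_eq_mul]
    _ ≤ |(NormedSpace.exp ((-t) • (L + P))) i j| + Real.exp (-t) * |P i j| := by
        refine le_trans (abs_sub _ _) ?_
        rw [abs_mul, abs_of_pos (Real.exp_pos _)]
    _ ≤ c₆ * Real.exp (-lam₆ * t) + Real.exp (-t) * W :=
        add_le_add hentry (mul_le_mul_of_nonneg_left hPij (Real.exp_pos _).le)
    _ ≤ c₆ * Real.exp (-lam * t) + Real.exp (-lam * t) * W := by
        refine add_le_add (mul_le_mul_of_nonneg_left hexple₆ hc₆.le) ?_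
        exact mul_le_mul_of_nonneg_right hexple1 hWnn
    _ ≤ (c₆ + W + 1) * Real.exp (-lam * t) := by nlinarith [Real.exp_pos (-lam * t)]

set_option maxHeartbeats 1000000 in
/-- if `G` has a rooted-out branch, `g = (1,…,1)ᵀ`, `wᵀL = 0` and `wᵀg = 1`,
then `exp(−tL) → g wᵀ` as `t → ∞`, exponentially fast in the operator norm induced by the
Euclidean norm. -/
theorem exp_neg_laplacian_tendsto_rank_one
    (N : ℕ) (a : Fin N → Fin N → ℝ) (ha : ∀ i j, 0 ≤ a i j)
    (L : Matrix (Fin N) (Fin N) ℝ) (hL : L = graphLaplacian a)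
    (hroot : hasRootedOutBranch a)
    (w : Fin N → ℝ) (hwL : Matrix.vecMul w L = 0) (hwg : ∑ i, w i = 1) :
    Filter.Tendsto (fun t : ℝ => NormedSpace.exp ((-t) • L)) Filter.atTop
        (nhds (Matrix.vecMulVec (fun _ => (1 : ℝ)) w)) ∧
    ∃ c > (0 : ℝ), ∃ lam > (0 : ℝ), ∀ t : ℝ, 0 ≤ t →
      ∀ x : Fin N → ℝ,
        euclidEnorm ((NormedSpace.exp ((-t) • L)
            - Matrix.vecMulVec (fun _ => (1 : ℝ)) w).mulVec x)
          ≤ c * Real.exp (-lam * t) * euclidEnorm x := by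
  subst hL
  obtain ⟨r, hrr⟩ := hroot
  obtain ⟨c, hc, lam, hlam, hb⟩ := real_decay ha hrr w hwL hwg
  have hexp0 : Filter.Tendsto (fun t : ℝ => c * Real.exp (-lam * t)) Filter.atTop (nhds 0) := by
    have h1 : Filter.Tendsto (fun t : ℝ => lam * t) Filter.atTop Filter.atTop :=
      Filter.Tendsto.const_mul_atTop hlam Filter.tendsto_id
    have h2 : Filter.Tendsto (fun t : ℝ => Real.exp (-(lam * t))) Filter.atTop (nhds 0) :=
      Real.tendsto_exp_neg_atTop_nhds_zero.comp h1
    have h3 : Filter.Tendsto (fun t : ℝ => c * Real.exp (-(lam * t))) Filter.atTop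
        (nhds (c * 0)) := h2.const_mul c
    simpa [neg_mul] using h3
  constructor
  · apply tendsto_pi_nhds.mpr
    intro i
    rw [tendsto_pi_nhds]
    intro j
    have hd : Filter.Tendsto (fun t : ℝ => ((NormedSpace.exp ((-t) • graphLaplacian a)
        - Matrix.vecMulVec (fun _ => (1:ℝ)) w : Matrix (Fin N) (Fin N) ℝ)) i j)
        Filter.atTop (nhds 0) := by
      apply squeeze_zero_norm' _ hexp0
      filter_upwards [Filter.eventually_ge_atTop (0:ℝ)] with t ht
      rw [Real.norm_eq_abs]
      exact hb t ht i j
    simp only [Matrix.sub_apply] at hd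
    exact tendsto_sub_nhds_zero_iff.mp hd
  · refine ⟨Real.sqrt N * N * c + 1, by positivity, lam, hlam, ?_⟩
    intro t ht x
    set D : Matrix (Fin N) (Fin N) ℝ := NormedSpace.exp ((-t) • graphLaplacian a)
      - Matrix.vecMulVec (fun _ => (1:ℝ)) w with hD
    set e : ℝ := Real.exp (-lam * t) with he
    have he0 : 0 < e := Real.exp_pos _
    have hxj : ∀ j, |x j| ≤ euclidEnorm x := by
      intro j
      rw [← Real.sqrt_sq_eq_abs]
      apply Real.sqrt_le_sqrt
      exact Finset.single_le_sum (f := fun k => x k ^ 2) (fun k _ => sq_nonneg _)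
        (Finset.mem_univ j)
    have hxnn : 0 ≤ euclidEnorm x := Real.sqrt_nonneg _
    have hDij : ∀ i j, |D i j| ≤ c * e := fun i j => hb t ht i j
    have hDxi : ∀ i, |(D.mulVec x) i| ≤ (N:ℝ) * ((c * e) * euclidEnorm x) := by
      intro i
      calc |(D.mulVec x) i| = |∑ j, D i j * x j| := by
            simp [Matrix.mulVec, dotProduct]
        _ ≤ ∑ j, |D i j * x j| := Finset.abs_sum_le_sum_abs _ _
        _ ≤ ∑ _j : Fin N, (c * e) * euclidEnorm x := by
            refine Finset.sum_le_sum fun j _ => ?_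
            rw [abs_mul]
            exact mul_le_mul (hDij i j) (hxj j) (abs_nonneg _) (by positivity)
        _ = (N:ℝ) * ((c * e) * euclidEnorm x) := by
            rw [Finset.sum_const, Finset.card_univ, Fintype.card_fin, nsmul_eq_mul]
    have hB0 : 0 ≤ (N:ℝ) * ((c * e) * euclidEnorm x) := by positivity
    have hfinal : euclidEnorm (D.mulVec x) ≤ Real.sqrt N * ((N:ℝ) * ((c * e) * euclidEnorm x)) := by
      unfold euclidEnorm
      have h1 : ∑ i, (D.mulVec x) i ^ 2 ≤ ∑ _i : Fin N, ((N:ℝ) * ((c * e) * euclidEnorm x)) ^ 2 := by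
        refine Finset.sum_le_sum fun i _ => ?_
        rw [← sq_abs]
        exact pow_le_pow_left₀ (abs_nonneg _) (hDxi i) 2
      calc Real.sqrt (∑ i, (D.mulVec x) i ^ 2)
          ≤ Real.sqrt (∑ _i : Fin N, ((N:ℝ) * ((c * e) * euclidEnorm x)) ^ 2) := Real.sqrt_le_sqrt h1
        _ = Real.sqrt ((N:ℝ) * ((N:ℝ) * ((c * e) * euclidEnorm x)) ^ 2) := by
            rw [Finset.sum_const, Finset.card_univ, Fintype.card_fin, nsmul_eq_mul]
        _ = Real.sqrt N * Real.sqrt (((N:ℝ) * ((c * e) * euclidEnorm x)) ^ 2) :=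
            Real.sqrt_mul (Nat.cast_nonneg N) _
        _ = Real.sqrt N * ((N:ℝ) * ((c * e) * euclidEnorm x)) := by rw [Real.sqrt_sq hB0]
    calc euclidEnorm (D.mulVec x) ≤ Real.sqrt N * ((N:ℝ) * ((c * e) * euclidEnorm x)) := hfinal
      _ = (Real.sqrt N * N * c) * e * euclidEnorm x := by ring
      _ ≤ (Real.sqrt N * N * c + 1) * e * euclidEnorm x := by nlinarith [mul_nonneg he0.le hxnn]
      _ = (Real.sqrt N * N * c + 1) * Real.exp (-lam * t) * euclidEnorm x := by rw [he]
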